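/- Suppose W isolates a minimum-weight matching M_k of size k (i.e., M_k is the unique matching of size k of minimum weight), and M_{k+1} is a minimum-weight matching of size k+1. Then the symmetric difference M_k Δ M_{k+1} is a single augmenting path with respect to M_k. -/

import Mathlib

set_option linter.unusedSectionVars false
set_option linter.unusedVariables false
set_option maxHeartbeats 1000000


variable {V : Type*} [DecidableEq V]

/-- `M` is a matching in the graph with edge set `E`: a set of edges of `E`
such that no two distinct edges share a vertex. -/
def IsMatching (E M : Finset (Sym2 V)) : Prop :=
  M ⊆ E ∧ ∀ e ∈ M, ∀ f ∈ M, e ≠ f → ∀ v, v ∈ e → v ∉ f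

/-- The list of edges of the path given by the vertex list `l`. -/
def pathEdges (l : List V) : List (Sym2 V) :=
  (l.zip l.tail).map fun p => s(p.1, p.2)

/-- `l` is (the vertex list of) an augmenting path with respect to the matching `M` in the
graph with edge set `E`: a path (distinct vertices, consecutive pairs forming edges of `E`)
with an odd number of edges, alternating between edges outside `M` (the even-indexed, in
particular the first and last) and edges of `M` (the odd-indexed), whose two endpoints are
unmatched by `M`. -/
def IsAugPath (E M : Finset (Sym2 V)) (l : List V) : Prop :=
  2 ≤ l.length ∧ l.Nodup ∧
    (∀ e ∈ pathEdges l, e ∈ E) ∧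
    (pathEdges l).length % 2 = 1 ∧
    (∀ i (h : i < (pathEdges l).length), ((pathEdges l)[i] ∈ M ↔ i % 2 = 1)) ∧
    (∀ e ∈ M, (∀ a, l.head? = some a → a ∉ e) ∧ (∀ a, l.getLast? = some a → a ∉ e))

/-- The weight of a set of edges. -/
def wt (W : Sym2 V → ℤ) (F : Finset (Sym2 V)) : ℤ := ∑ e ∈ F, W e

/-- `W` isolates the matching `M` of size `k`: `M` is a matching of size `k` and every
other matching of size `k` has strictly larger weight. -/
def Isolates (W : Sym2 V → ℤ) (E : Finset (Sym2 V)) (k : ℕ) (M : Finset (Sym2 V)) : Prop :=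
  IsMatching E M ∧ M.card = k ∧
    ∀ M', IsMatching E M' → M'.card = k → M' ≠ M → wt W M < wt W M'

/-- `M` is a minimum-weight matching of size `j`. -/
def MinOfSize (W : Sym2 V → ℤ) (E : Finset (Sym2 V)) (j : ℕ) (M : Finset (Sym2 V)) : Prop :=
  IsMatching E M ∧ M.card = j ∧
    ∀ M', IsMatching E M' → M'.card = j → wt W M ≤ wt W M'

/-- The edge set `E` is bipartite with left part `L`. -/
def Bipartite (E : Finset (Sym2 V)) (L : Finset V) : Prop :=
  ∀ e ∈ E, ∃ u ∈ L, ∃ v, v ∉ L ∧ e = s(u, v)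

/-! ### path edge basics -/

theorem pathEdges_length (l : List V) : (pathEdges l).length = l.length - 1 := by
  simp [pathEdges]

theorem pathEdges_getElem (l : List V) (i : ℕ) (h : i < (pathEdges l).length) :
    (pathEdges l)[i] = s(l[i]'(by simp [pathEdges_length] at h; omega),
      l[i+1]'(by simp [pathEdges_length] at h; omega)) := by
  simp [pathEdges]

theorem mem_pathEdges_iff (l : List V) (e : Sym2 V) :
    e ∈ pathEdges l ↔ ∃ i, ∃ h : i + 1 < l.length,
      e = s(l[i]'(by omega), l[i+1]'h) := by
  rw [List.mem_iff_getElem]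
  constructor
  · rintro ⟨i, h, rfl⟩
    refine ⟨i, by have := pathEdges_length l; omega, ?_⟩
    exact pathEdges_getElem l i h
  · rintro ⟨i, h, rfl⟩
    refine ⟨i, by have := pathEdges_length l; omega, ?_⟩
    rw [pathEdges_getElem l i _]

theorem pathEdges_nodup (l : List V) (h : l.Nodup) : (pathEdges l).Nodup := by
  rw [List.nodup_iff_injective_getElem]
  rintro ⟨i, hi⟩ ⟨j, hj⟩ hij
  have hl := pathEdges_length l
  simp only at hij
  rw [pathEdges_getElem l i hi, pathEdges_getElem l j hj] at hij
  simp only [Sym2.eq, Sym2.rel_iff', Prod.mk.injEq, Prod.swap_prod_mk] at hij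
  have inj : ∀ a b (ha : a < l.length) (hb : b < l.length), l[a] = l[b] → a = b :=
    fun a b ha hb hab => (List.Nodup.getElem_inj_iff h).mp hab
  rcases hij with ⟨h1, _⟩ | ⟨h1, h2⟩
  · simp only [Fin.mk.injEq]
    exact inj i j (by omega) (by omega) h1
  · have := inj i (j+1) (by omega) (by omega) h1
    have := inj (i+1) j (by omega) (by omega) h2
    omega

theorem getElem_idx_congr (l : List V) {i j : ℕ} (h : i = j) (hi : i < l.length) :
    l[i] = l[j]'(h ▸ hi) := by subst h; rfl

/-! ### matching basics -/

theorem matching_eq_of_mem {E M : Finset (Sym2 V)} (hM : IsMatching E M)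
    {e f : Sym2 V} (he : e ∈ M) (hf : f ∈ M) {v : V} (hve : v ∈ e) (hvf : v ∈ f) : e = f := by
  by_contra hne
  exact hM.2 e he f hf hne v hve hvf

theorem exists_other {E : Finset (Sym2 V)} {L : Finset V} (hbip : Bipartite E L)
    {g : Sym2 V} (hg : g ∈ E) {v : V} (hv : v ∈ g) : ∃ w, w ≠ v ∧ g = s(v, w) := by
  obtain ⟨u, hu, x, hx, rfl⟩ := hbip g hg
  rcases Sym2.mem_iff.mp hv with rfl | rfl
  · exact ⟨x, fun h => hx (h ▸ hu), rfl⟩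
  · exact ⟨u, fun h => hx (h ▸ hu), Sym2.eq_swap⟩

/-! ### counting lemmas -/

theorem alt_filter_len {α : Type*} (p : α → Prop) [DecidablePred p] :
    ∀ (es : List α), (∀ i (h : i < es.length), p es[i] ↔ i % 2 = 1) →
      (es.filter (fun e => decide (p e))).length = es.length / 2
  | [], _ => by simp
  | [e], h => by
      have h0 := h 0 (by simp)
      simp at h0
      simp [List.filter, h0]
  | e :: f :: rest, h => by
      have h0 := h 0 (by simp)
      have h1 := h 1 (by simp)
      simp at h0 h1
      have ih := alt_filter_len p rest (fun i hi => by
        have := h (i + 2) (by simpa using by omega)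
        simpa [Nat.add_mod_right] using this)
      simp [List.filter_cons, h0, h1, ih]
      omega

/-! ### the swap lemma -/

theorem swap_lemma (E : Finset (Sym2 V)) (W : Sym2 V → ℤ) (M N S : Finset (Sym2 V))
    (hM : IsMatching E M) (hN : IsMatching E N)
    (hS : S ⊆ symmDiff M N)
    (habs : ∀ f ∈ symmDiff M N, (∃ v g, g ∈ S ∧ v ∈ g ∧ v ∈ f) → f ∈ S) :
    IsMatching E ((M \ S) ∪ (S ∩ N)) ∧
    ((M \ S) ∪ (S ∩ N)).card + (S ∩ M).card = M.card + (S ∩ N).card ∧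
    wt W ((M \ S) ∪ (S ∩ N)) + wt W (S ∩ M) = wt W M + wt W (S ∩ N) := by
  have hSN : S ∩ N ⊆ N \ M := by
    intro e he
    simp only [Finset.mem_inter] at he
    have := hS he.1
    rw [Finset.mem_symmDiff] at this
    simp only [Finset.mem_sdiff]
    tauto
  have hdisj : Disjoint (M \ S) (S ∩ N) := by
    intro x hx1 hx2 y hy
    have h1 := hx1 hy
    have h2 := hx2 hy
    simp only [Finset.mem_sdiff] at h1
    have := hSN h2
    simp only [Finset.mem_sdiff] at this
    exact absurd h1.1 this.2
  constructor
  · constructor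
    · intro e he
      rcases Finset.mem_union.mp he with h | h
      · exact hM.1 (Finset.mem_sdiff.mp h).1
      · exact hN.1 (Finset.mem_inter.mp h).2
    · intro e he f hf hne v hve hvf
      rcases Finset.mem_union.mp he with he' | he' <;> rcases Finset.mem_union.mp hf with hf' | hf'
      · exact hM.2 e (Finset.mem_sdiff.mp he').1 f (Finset.mem_sdiff.mp hf').1 hne v hve hvf
      · rw [Finset.mem_sdiff] at he'
        rw [Finset.mem_inter] at hf'
        by_cases heN : e ∈ N
        · exact hN.2 e heN f hf'.2 hne v hve hvf
        · have heD : e ∈ symmDiff M N := by rw [Finset.mem_symmDiff]; tauto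
          exact absurd (habs e heD ⟨v, f, hf'.1, hvf, hve⟩) he'.2
      · rw [Finset.mem_sdiff] at hf'
        rw [Finset.mem_inter] at he'
        by_cases hfN : f ∈ N
        · exact hN.2 e he'.2 f hfN hne v hve hvf
        · have hfD : f ∈ symmDiff M N := by rw [Finset.mem_symmDiff]; tauto
          exact absurd (habs f hfD ⟨v, e, he'.1, hve, hvf⟩) hf'.2
      · exact hN.2 e (Finset.mem_inter.mp he').2 f (Finset.mem_inter.mp hf').2 hne v hve hvf
  · have hMS : M \ S = M \ (S ∩ M) := by
      ext x; simp only [Finset.mem_sdiff, Finset.mem_inter]; tauto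
    have hsub : S ∩ M ⊆ M := Finset.inter_subset_right
    constructor
    · rw [Finset.card_union_of_disjoint hdisj, hMS]
      have := Finset.card_sdiff_add_card_eq_card hsub
      omega
    · simp only [wt]
      rw [Finset.sum_union hdisj, hMS]
      have : (∑ e ∈ M \ (S ∩ M), W e) + ∑ e ∈ S ∩ M, W e = ∑ e ∈ M, W e := by
        rw [← Finset.sum_union (Finset.sdiff_disjoint), Finset.sdiff_union_of_subset hsub]
      linarith

/-! ### the balanced-set contradiction -/

theorem balanced_contra (E : Finset (Sym2 V)) (W : Sym2 V → ℤ) (k : ℕ)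
    (Mk Mk1 : Finset (Sym2 V)) (hMk : Isolates W E k Mk) (hMk1 : MinOfSize W E (k + 1) Mk1)
    (S : Finset (Sym2 V)) (hS : S ⊆ symmDiff Mk Mk1)
    (habs : ∀ f ∈ symmDiff Mk Mk1, (∃ v g, g ∈ S ∧ v ∈ g ∧ v ∈ f) → f ∈ S)
    (hcard : (S ∩ Mk).card = (S ∩ Mk1).card) (hne : (S ∩ Mk1).Nonempty) : False := by
  obtain ⟨hm1, hc1, hw1⟩ := swap_lemma E W Mk Mk1 S hMk.1 hMk1.1 hS habs
  have hS' : S ⊆ symmDiff Mk1 Mk := by rwa [symmDiff_comm]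
  have habs' : ∀ f ∈ symmDiff Mk1 Mk, (∃ v g, g ∈ S ∧ v ∈ g ∧ v ∈ f) → f ∈ S := by
    rw [symmDiff_comm]; exact habs
  obtain ⟨hm2, hc2, hw2⟩ := swap_lemma E W Mk1 Mk S hMk1.1 hMk.1 hS' habs'
  set M' := (Mk \ S) ∪ (S ∩ Mk1) with hM'
  set N' := (Mk1 \ S) ∪ (S ∩ Mk) with hN'
  obtain ⟨f, hf⟩ := hne
  have hfS : f ∈ S := (Finset.mem_inter.mp hf).1
  have hfMk1 : f ∈ Mk1 := (Finset.mem_inter.mp hf).2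
  have hfD := hS hfS
  rw [Finset.mem_symmDiff] at hfD
  have hfnMk : f ∉ Mk := by tauto
  have hfM' : f ∈ M' := Finset.mem_union_right _ hf
  have hMne : M' ≠ Mk := fun h => hfnMk (h ▸ hfM')
  have hcM' : M'.card = k := by
    have := hMk.2.1
    omega
  have hcN' : N'.card = k + 1 := by
    have := hMk1.2.1
    omega
  have h1 : wt W Mk < wt W M' := hMk.2.2 M' hm1 hcM' hMne
  have h2 : wt W Mk1 ≤ wt W N' := hMk1.2.2 N' hm2 hcN'
  linarith

/-! ### walks -/

def GoodWalk (Mk Mk1 : Finset (Sym2 V)) (l : List V) : Prop :=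
  2 ≤ l.length ∧ l.Nodup ∧
  (∀ e ∈ Mk, ∀ (h : 0 < l.length), l[0] ∉ e) ∧
  ∀ i (h : i < (pathEdges l).length),
    (i % 2 = 0 → (pathEdges l)[i] ∈ Mk1 \ Mk) ∧ (i % 2 = 1 → (pathEdges l)[i] ∈ Mk \ Mk1)

theorem goodWalk_sub {Mk Mk1 : Finset (Sym2 V)} {l : List V} (hG : GoodWalk Mk Mk1 l) :
    ∀ e ∈ pathEdges l, e ∈ symmDiff Mk Mk1 := by
  intro e he
  obtain ⟨i, hi, rfl⟩ := List.mem_iff_getElem.mp he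
  have := hG.2.2.2 i hi
  rw [Finset.mem_symmDiff]
  rcases Nat.even_or_odd i with hpar | hpar
  · have := this.1 (Nat.even_iff.mp hpar)
    simp only [Finset.mem_sdiff] at this
    tauto
  · have := this.2 (Nat.odd_iff.mp hpar)
    simp only [Finset.mem_sdiff] at this
    tauto

/-- key fact: at most one path edge of each matching side touches a given path vertex,
    and any edge of that matching touching the vertex equals it. -/
theorem walk_absorb {E : Finset (Sym2 V)} {Mk Mk1 : Finset (Sym2 V)}
    (hMkm : IsMatching E Mk) (hMk1m : IsMatching E Mk1)
    {l : List V} (hG : GoodWalk Mk Mk1 l)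
    (hlast : ((l.length - 1) % 2 = 1 ∧ ∀ e ∈ Mk, ∀ (h : 0 < l.length), l[l.length - 1] ∉ e) ∨
             ((l.length - 1) % 2 = 0 ∧ ∀ e ∈ Mk1, ∀ (h : 0 < l.length), l[l.length - 1] ∉ e)) :
    ∀ f ∈ symmDiff Mk Mk1, (∃ v g, g ∈ (pathEdges l).toFinset ∧ v ∈ g ∧ v ∈ f) →
      f ∈ (pathEdges l).toFinset := by
  obtain ⟨hlen, hnd, hhead, halt⟩ := hG
  have hpl := pathEdges_length l
  set t := l.length - 1 with ht
  have hlpos : 0 < l.length := by omega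
  have ht1 : 1 ≤ t := by omega
  intro f hfD hv
  obtain ⟨v, g, hgP, hvg, hvf⟩ := hv
  rw [List.mem_toFinset, mem_pathEdges_iff] at hgP
  obtain ⟨i, hi1, rfl⟩ := hgP
  -- v = l[j] with j ≤ t
  have hj : ∃ j, ∃ hjl : j < l.length, v = l[j] := by
    rcases Sym2.mem_iff.mp hvg with h | h
    · exact ⟨i, by omega, h⟩
    · exact ⟨i + 1, by omega, h⟩
  obtain ⟨j, hjl, rfl⟩ := hj
  rw [List.mem_toFinset]
  have key : ∀ (M : Finset (Sym2 V)), IsMatching E M → f ∈ M →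
      ∀ m, (hm : m < (pathEdges l).length) → (pathEdges l)[m] ∈ M →
      (j = m ∨ j = m + 1) → f ∈ pathEdges l := by
    intro M hMm hfM m hm hmem hjm
    have hvm : l[j] ∈ (pathEdges l)[m] := by
      rw [pathEdges_getElem]
      rcases hjm with rfl | rfl
      · exact Sym2.mem_mk_left _ _
      · rw [Sym2.mem_iff]
        right
        exact getElem_idx_congr l rfl _
    have := matching_eq_of_mem hMm hmem hfM hvm hvf
    rw [← this]
    exact List.getElem_mem _
  rw [Finset.mem_symmDiff] at hfD
  rcases hfD with ⟨hfMk, hfnMk1⟩ | ⟨hfMk1, hfnMk⟩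
  · -- f ∈ Mk \ Mk1 : find odd edge index at l[j]
    by_cases hj0 : j = 0
    · subst hj0
      exact absurd hvf (hhead f hfMk hlpos)
    by_cases hjodd : j % 2 = 1
    · by_cases hjt : j = t
      · -- j = t odd: last vertex Mk-unmatched in the odd case
        rcases hlast with ⟨_, hl2⟩ | ⟨hl1, _⟩
        · subst hjt
          exact absurd hvf (hl2 f hfMk hlpos)
        · omega
      · -- j odd < t : edge j is an Mk-edge containing l[j]
        have hmlt : j < (pathEdges l).length := by omega
        exact key Mk hMkm hfMk j hmlt (Finset.mem_sdiff.mp ((halt j hmlt).2 hjodd)).1 (Or.inl rfl)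
    · -- j even > 0 : edge (j-1) is an Mk-edge containing l[j]
      have hmlt : j - 1 < (pathEdges l).length := by omega
      have hodd : (j - 1) % 2 = 1 := by omega
      exact key Mk hMkm hfMk (j-1) hmlt (Finset.mem_sdiff.mp ((halt (j-1) hmlt).2 hodd)).1 (Or.inr (by omega))
  · -- f ∈ Mk1 \ Mk : find even edge index at l[j]
    by_cases hjeven : j % 2 = 0
    · by_cases hjt : j = t
      · rcases hlast with ⟨hl1, _⟩ | ⟨_, hl2⟩
        · omega
        · subst hjt
          exact absurd hvf (hl2 f hfMk1 hlpos)
      · have hmlt : j < (pathEdges l).length := by omega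
        exact key Mk1 hMk1m hfMk1 j hmlt (Finset.mem_sdiff.mp ((halt j hmlt).1 hjeven)).1 (Or.inl rfl)
    · have hmlt : j - 1 < (pathEdges l).length := by omega
      have heven : (j - 1) % 2 = 0 := by omega
      exact key Mk1 hMk1m hfMk1 (j-1) hmlt (Finset.mem_sdiff.mp ((halt (j-1) hmlt).1 heven)).1 (Or.inr (by omega))

theorem walk_counts {Mk Mk1 : Finset (Sym2 V)} {l : List V} (hG : GoodWalk Mk Mk1 l) :
    ((pathEdges l).toFinset ∩ Mk).card = (pathEdges l).length / 2 ∧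
    ((pathEdges l).toFinset ∩ Mk1).card = (pathEdges l).length - (pathEdges l).length / 2 := by
  classical
  obtain ⟨hlen, hnd, hhead, halt⟩ := hG
  have hndE : (pathEdges l).Nodup := pathEdges_nodup l hnd
  set es := pathEdges l with hes
  have hiff : ∀ i (h : i < es.length), es[i] ∈ Mk ↔ i % 2 = 1 := by
    intro i h
    constructor
    · intro hm
      by_contra hodd
      have := (halt i h).1 (by omega)
      rw [Finset.mem_sdiff] at this
      exact this.2 hm
    · intro hodd
      exact (Finset.mem_sdiff.mp ((halt i h).2 hodd)).1
  have hiff1 : ∀ i (h : i < es.length), es[i] ∈ Mk1 ↔ ¬ (i % 2 = 1) := by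
    intro i h
    constructor
    · intro hm hodd
      have := (halt i h).2 hodd
      rw [Finset.mem_sdiff] at this
      exact this.2 hm
    · intro hodd
      exact (Finset.mem_sdiff.mp ((halt i h).1 (by omega))).1
  have hfilter : (es.filter (fun e => decide (e ∈ Mk))).length = es.length / 2 :=
    alt_filter_len (· ∈ Mk) es hiff
  have hsetMk : es.toFinset ∩ Mk = (es.filter (fun e => decide (e ∈ Mk))).toFinset := by
    ext x
    simp only [Finset.mem_inter, List.mem_toFinset, List.mem_filter, decide_eq_true_eq]
  have hcard1 : (es.toFinset ∩ Mk).card = es.length / 2 := by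
    rw [hsetMk, List.card_toFinset, List.Nodup.dedup (hndE.filter _)]
    exact hfilter
  refine ⟨hcard1, ?_⟩
  have hcongr : es.filter (fun e => decide (e ∈ Mk1)) = es.filter (fun e => !decide (e ∈ Mk)) := by
    apply List.filter_congr
    intro x hx
    obtain ⟨i, hi, rfl⟩ := List.mem_iff_getElem.mp hx
    have h1 := hiff i hi
    have h2 := hiff1 i hi
    by_cases hp : i % 2 = 1 <;> simp [h1, h2, hp]
  have hlenf := List.length_eq_length_filter_add (l := es) (fun e => decide (e ∈ Mk))
  have : (es.filter (fun e => decide (e ∈ Mk1))).length = es.length - es.length / 2 := by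
    rw [hcongr]
    omega
  have hsetMk1 : es.toFinset ∩ Mk1 = (es.filter (fun e => decide (e ∈ Mk1))).toFinset := by
    ext x
    simp only [Finset.mem_inter, List.mem_toFinset, List.mem_filter, decide_eq_true_eq]
  rw [hsetMk1, List.card_toFinset, List.Nodup.dedup (hndE.filter _)]
  exact this

theorem new_vertex_A {E : Finset (Sym2 V)} {Mk Mk1 : Finset (Sym2 V)}
    (hMkm : IsMatching E Mk) {l : List V} (hG : GoodWalk Mk Mk1 l)
    (t : ℕ) (htl : t + 1 = l.length) (htodd : t % 2 = 1)
    {g : Sym2 V} {w : V} (hg : g ∈ Mk)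
    (hgeq : g = s(l[t]'(by omega), w)) (hw : w ≠ l[t]'(by omega)) : w ∉ l := by
  intro hwl
  obtain ⟨hlen, hnd, hhead, halt⟩ := hG
  have hpl := pathEdges_length l
  obtain ⟨j, hjl, rfl⟩ := List.mem_iff_getElem.mp hwl
  have inj : ∀ a b (ha : a < l.length) (hb : b < l.length), l[a] = l[b] → a = b :=
    fun a b ha hb hab => (List.Nodup.getElem_inj_iff hnd).mp hab
  have hjt : j ≠ t := fun h => hw (getElem_idx_congr l h hjl)
  have hvg : l[j] ∈ g := by rw [hgeq, Sym2.mem_iff]; right; rfl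
  by_cases hj0 : j = 0
  · subst hj0
    exact hhead g hg (by omega) hvg
  · have hcase : ∃ m, m % 2 = 1 ∧ m < t ∧ (j = m ∨ j = m + 1) := by
      by_cases hj2 : j % 2 = 1
      · exact ⟨j, hj2, by omega, Or.inl rfl⟩
      · exact ⟨j - 1, by omega, by omega, Or.inr (by omega)⟩
    obtain ⟨m, hmodd, hmt, hjm⟩ := hcase
    have hmlt : m < (pathEdges l).length := by omega
    have hedge := (Finset.mem_sdiff.mp ((halt m hmlt).2 hmodd)).1
    have hvm : l[j] ∈ (pathEdges l)[m] := by
      rw [pathEdges_getElem]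
      rcases hjm with rfl | rfl
      · exact Sym2.mem_mk_left _ _
      · rw [Sym2.mem_iff]; right; exact getElem_idx_congr l rfl _
    have heq := matching_eq_of_mem hMkm hg hedge hvg hvm
    have hltm : l[t]'(by omega) ∈ (pathEdges l)[m] := by
      rw [← heq, hgeq]; exact Sym2.mem_mk_left _ _
    rw [pathEdges_getElem] at hltm
    rcases Sym2.mem_iff.mp hltm with h | h
    · exact absurd (inj t m (by omega) (by omega) h) (by omega)
    · have := inj t (m+1) (by omega) (by omega) h
      omega

theorem new_vertex_B {E : Finset (Sym2 V)} {Mk Mk1 : Finset (Sym2 V)}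
    (hMk1m : IsMatching E Mk1) {l : List V} (hG : GoodWalk Mk Mk1 l)
    (t : ℕ) (htl : t + 1 = l.length) (hteven : t % 2 = 0)
    {g : Sym2 V} {w : V} (hg : g ∈ Mk1)
    (hgeq : g = s(l[t]'(by omega), w)) (hw : w ≠ l[t]'(by omega)) : w ∉ l := by
  intro hwl
  obtain ⟨hlen, hnd, hhead, halt⟩ := hG
  have hpl := pathEdges_length l
  have ht2 : 2 ≤ t := by omega
  obtain ⟨j, hjl, rfl⟩ := List.mem_iff_getElem.mp hwl
  have inj : ∀ a b (ha : a < l.length) (hb : b < l.length), l[a] = l[b] → a = b :=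
    fun a b ha hb hab => (List.Nodup.getElem_inj_iff hnd).mp hab
  have hjt : j ≠ t := fun h => hw (getElem_idx_congr l h hjl)
  have hvg : l[j] ∈ g := by rw [hgeq, Sym2.mem_iff]; right; rfl
  have hcase : ∃ m, m % 2 = 0 ∧ m < t ∧ (j = m ∨ j = m + 1) := by
    by_cases hj2 : j % 2 = 0
    · exact ⟨j, hj2, by omega, Or.inl rfl⟩
    · exact ⟨j - 1, by omega, by omega, Or.inr (by omega)⟩
  obtain ⟨m, hmeven, hmt, hjm⟩ := hcase
  have hmlt : m < (pathEdges l).length := by omega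
  have hedge := (Finset.mem_sdiff.mp ((halt m hmlt).1 hmeven)).1
  have hvm : l[j] ∈ (pathEdges l)[m] := by
    rw [pathEdges_getElem]
    rcases hjm with rfl | rfl
    · exact Sym2.mem_mk_left _ _
    · rw [Sym2.mem_iff]; right; exact getElem_idx_congr l rfl _
  have heq := matching_eq_of_mem hMk1m hg hedge hvg hvm
  have hltm : l[t]'(by omega) ∈ (pathEdges l)[m] := by
    rw [← heq, hgeq]; exact Sym2.mem_mk_left _ _
  rw [pathEdges_getElem] at hltm
  rcases Sym2.mem_iff.mp hltm with h | h
  · exact absurd (inj t m (by omega) (by omega) h) (by omega)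
  · have := inj t (m+1) (by omega) (by omega) h
    omega

theorem goodwalk_extend {Mk Mk1 : Finset (Sym2 V)} {l : List V} (hG : GoodWalk Mk Mk1 l)
    (t : ℕ) (htl : t + 1 = l.length) {g : Sym2 V} {w : V}
    (hgeq : g = s(l[t]'(by omega), w)) (hwl : w ∉ l)
    (hside : (t % 2 = 0 ∧ g ∈ Mk1 \ Mk) ∨ (t % 2 = 1 ∧ g ∈ Mk \ Mk1)) :
    GoodWalk Mk Mk1 (l ++ [w]) := by
  obtain ⟨hlen, hnd, hhead, halt⟩ := hG
  have hpl := pathEdges_length l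
  have hlen' : (l ++ [w]).length = l.length + 1 := by simp
  have hget : ∀ (i : ℕ) (h : i < l.length), (l ++ [w])[i]'(by simp; omega) = l[i] :=
    fun i h => List.getElem_append_left h
  have hgetw : (l ++ [w])[t+1]'(by simp; omega) = w := by
    have h1 : (l ++ [w])[t+1]'(by simp; omega) = (l ++ [w])[l.length]'(by simp) :=
      getElem_idx_congr (l ++ [w]) htl (by simp; omega)
    rw [h1]; simp
  refine ⟨by simp; omega, by simp [List.nodup_append, hnd, hwl]; rintro a ha rfl; exact hwl ha, ?_, ?_⟩
  · intro e he h
    rw [show ((l ++ [w])[0]'h) = l[0]'(by omega) from hget 0 (by omega)]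
    exact hhead e he (by omega)
  · intro i hi
    have hpl' : (pathEdges (l ++ [w])).length = t + 1 := by
      rw [pathEdges_length]; simp; omega
    rw [hpl'] at hi
    by_cases hit : i < t
    · have hi1 : i + 1 < l.length := by omega
      have : (pathEdges (l ++ [w]))[i]'(by omega) = (pathEdges l)[i]'(by omega) := by
        rw [pathEdges_getElem, pathEdges_getElem, hget i (by omega), hget (i+1) hi1]
      rw [this]
      exact halt i (by omega)
    · have hit' : i = t := by omega
      subst hit'
      have : (pathEdges (l ++ [w]))[i]'(by omega) = g := by
        rw [pathEdges_getElem, hget i (by omega), hgetw, hgeq]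
      rw [this]
      rcases hside with ⟨h1, h2⟩ | ⟨h1, h2⟩
      · exact ⟨fun _ => h2, fun hh => by omega⟩
      · exact ⟨fun hh => by omega, fun _ => h2⟩


theorem deadend (E : Finset (Sym2 V)) (W : Sym2 V → ℤ) (k : ℕ)
    (Mk Mk1 : Finset (Sym2 V)) (hMk : Isolates W E k Mk) (hMk1 : MinOfSize W E (k + 1) Mk1)
    {l : List V} (hG : GoodWalk Mk Mk1 l) (hteven : (l.length - 1) % 2 = 0)
    (hlast : ∀ e ∈ Mk1, ∀ (h : 0 < l.length), l[l.length - 1] ∉ e) : False := by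
  have hpl := pathEdges_length l
  have hlen := hG.1
  have habs := walk_absorb hMk.1 hMk1.1 hG (Or.inr ⟨hteven, hlast⟩)
  have hsub : (pathEdges l).toFinset ⊆ symmDiff Mk Mk1 := fun e he =>
    goodWalk_sub hG e (List.mem_toFinset.mp he)
  obtain ⟨hc1, hc2⟩ := walk_counts hG
  have ht2 : 2 ≤ (pathEdges l).length := by omega
  refine balanced_contra E W k Mk Mk1 hMk hMk1 _ hsub habs (by omega) ?_
  rw [← Finset.card_pos, hc2]
  omega

theorem walk_step (E : Finset (Sym2 V)) (L : Finset V) (hbip : Bipartite E L)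
    (W : Sym2 V → ℤ) (k : ℕ) (Mk Mk1 : Finset (Sym2 V))
    (hMk : Isolates W E k Mk) (hMk1 : MinOfSize W E (k + 1) Mk1)
    (l : List V) (hG : GoodWalk Mk Mk1 l) :
    ((pathEdges l).length % 2 = 1 ∧
      ∀ e ∈ Mk, ∀ (h : 0 < l.length), l[l.length - 1] ∉ e) ∨
    ∃ w, w ∉ l ∧ GoodWalk Mk Mk1 (l ++ [w]) := by
  obtain ⟨hlen, hnd, hhead, halt⟩ := id hG
  have hpl := pathEdges_length l
  set t := l.length - 1 with htdef
  have htl : t + 1 = l.length := by omega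
  have htpos : 1 ≤ t := by omega
  by_cases htp : t % 2 = 1
  · by_cases hm : ∃ g ∈ Mk, l[t]'(by omega) ∈ g
    · obtain ⟨g, hgMk, hvg⟩ := hm
      obtain ⟨w, hwne, hgeq⟩ := exists_other hbip (hMk.1.1 hgMk) hvg
      have hwl := new_vertex_A hMk.1 hG t htl htp hgMk hgeq hwne
      have hgD : g ∈ Mk \ Mk1 := by
        rw [Finset.mem_sdiff]
        refine ⟨hgMk, fun hg1 => ?_⟩
        have hmlt : t - 1 < (pathEdges l).length := by omega
        have hedge := (halt (t-1) hmlt).1 (by omega)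
        have hedgeMk1 := (Finset.mem_sdiff.mp hedge).1
        have hvm : l[t]'(by omega) ∈ (pathEdges l)[t-1] := by
          rw [pathEdges_getElem, Sym2.mem_iff]
          right
          exact getElem_idx_congr l (by omega) (by omega)
        have hge := matching_eq_of_mem hMk1.1 hg1 hedgeMk1 hvg hvm
        exact (Finset.mem_sdiff.mp hedge).2 (hge ▸ hgMk)
      exact Or.inr ⟨w, hwl, goodwalk_extend hG t htl hgeq hwl (Or.inr ⟨htp, hgD⟩)⟩
    · push_neg at hm
      exact Or.inl ⟨by omega, fun e he h => hm e he⟩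
  · have hte : t % 2 = 0 := by omega
    by_cases hm : ∃ g ∈ Mk1, l[t]'(by omega) ∈ g
    · obtain ⟨g, hgMk1, hvg⟩ := hm
      obtain ⟨w, hwne, hgeq⟩ := exists_other hbip (hMk1.1.1 hgMk1) hvg
      have hwl := new_vertex_B hMk1.1 hG t htl hte hgMk1 hgeq hwne
      have hgD : g ∈ Mk1 \ Mk := by
        rw [Finset.mem_sdiff]
        refine ⟨hgMk1, fun hg0 => ?_⟩
        have hmlt : t - 1 < (pathEdges l).length := by omega
        have hedge := (halt (t-1) hmlt).2 (by omega)
        have hedgeMk := (Finset.mem_sdiff.mp hedge).1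
        have hvm : l[t]'(by omega) ∈ (pathEdges l)[t-1] := by
          rw [pathEdges_getElem, Sym2.mem_iff]
          right
          exact getElem_idx_congr l (by omega) (by omega)
        have hge := matching_eq_of_mem hMk.1 hg0 hedgeMk hvg hvm
        exact (Finset.mem_sdiff.mp hedge).2 (hge ▸ hgMk1)
      exact Or.inr ⟨w, hwl, goodwalk_extend hG t htl hgeq hwl (Or.inl ⟨hte, hgD⟩)⟩
    · push_neg at hm
      exact absurd (deadend E W k Mk Mk1 hMk hMk1 hG hte (fun e he h => hm e he)) id

theorem walk_run (E : Finset (Sym2 V)) (L : Finset V) (hbip : Bipartite E L)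
    (W : Sym2 V → ℤ) (k : ℕ) (Mk Mk1 : Finset (Sym2 V))
    (hMk : Isolates W E k Mk) (hMk1 : MinOfSize W E (k + 1) Mk1) :
    ∀ (n : ℕ) (l : List V), GoodWalk Mk Mk1 l →
      (symmDiff Mk Mk1).card ≤ (pathEdges l).length + n →
      ∃ l', GoodWalk Mk Mk1 l' ∧ (pathEdges l').length % 2 = 1 ∧
        ∀ e ∈ Mk, ∀ (h : 0 < l'.length), l'[l'.length - 1] ∉ e := by
  intro n
  induction n with
  | zero =>
    intro l hG hfuel
    rcases walk_step E L hbip W k Mk Mk1 hMk hMk1 l hG with h | ⟨w, hwl, hG'⟩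
    · exact ⟨l, hG, h.1, h.2⟩
    · exfalso
      have hnd' := pathEdges_nodup _ hG'.2.1
      have hle : (pathEdges (l ++ [w])).length ≤ (symmDiff Mk Mk1).card := by
        have hsub' : (pathEdges (l ++ [w])).toFinset ⊆ symmDiff Mk Mk1 := fun e he =>
          goodWalk_sub hG' e (List.mem_toFinset.mp he)
        have := Finset.card_le_card hsub'
        rwa [List.card_toFinset, List.Nodup.dedup hnd'] at this
      have h1 := pathEdges_length (l ++ [w])
      have h2 := pathEdges_length l
      have h3 : (l ++ [w]).length = l.length + 1 := by simp
      have h4 := hG.1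
      omega
  | succ n ih =>
    intro l hG hfuel
    rcases walk_step E L hbip W k Mk Mk1 hMk hMk1 l hG with h | ⟨w, hwl, hG'⟩
    · exact ⟨l, hG, h.1, h.2⟩
    · refine ih (l ++ [w]) hG' ?_
      have h1 := pathEdges_length (l ++ [w])
      have h2 := pathEdges_length l
      have h3 : (l ++ [w]).length = l.length + 1 := by simp
      have h4 := hG.1
      omega

def sverts (e : Sym2 V) : Finset V :=
  Sym2.lift ⟨fun a b => ({a, b} : Finset V), fun a b => by
    ext x; simp [or_comm]⟩ e

theorem mem_sverts (e : Sym2 V) (v : V) : v ∈ sverts e ↔ v ∈ e := by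
  induction e using Sym2.ind with
  | _ a b => simp [sverts, Sym2.mem_iff]

theorem exists_exposed {E : Finset (Sym2 V)} {L : Finset V} (hbip : Bipartite E L)
    {Mk Mk1 : Finset (Sym2 V)} (hMkm : IsMatching E Mk) (hMk1m : IsMatching E Mk1)
    (k : ℕ) (hck : Mk.card = k) (hck1 : Mk1.card = k + 1) :
    ∃ f ∈ Mk1, f ∉ Mk ∧ ∃ v, v ∈ f ∧ ∀ g ∈ Mk, v ∉ g := by
  classical
  have hcov1 : (Mk1.biUnion sverts).card = 2 * (k + 1) := by
    rw [Finset.card_biUnion]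
    · have hh : ∀ e ∈ Mk1, (sverts e).card = 2 := by
        intro e he
        obtain ⟨u, hu, x, hx, rfl⟩ := hbip e (hMk1m.1 he)
        have hne : u ≠ x := fun h => hx (h ▸ hu)
        show ({u, x} : Finset V).card = 2
        rw [Finset.card_insert_of_notMem (by simp [hne]), Finset.card_singleton]
      rw [Finset.sum_congr rfl hh, Finset.sum_const, hck1]
      ring
    · intro x hx y hy hxy
      rw [Function.onFun, Finset.disjoint_left]
      intro v hv1 hv2
      rw [mem_sverts] at hv1 hv2
      exact hMk1m.2 x hx y hy hxy v hv1 hv2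
  have hcov2 : (Mk.biUnion sverts).card ≤ 2 * k := by
    have := Finset.card_biUnion_le_card_mul Mk sverts 2 (fun e _ => by
      induction e using Sym2.ind with
      | _ a b =>
        show ({a, b} : Finset V).card ≤ 2
        exact le_trans (Finset.card_insert_le _ _) (by simp))
    omega
  have hns : ¬ Mk1.biUnion sverts ⊆ Mk.biUnion sverts := fun h => by
    have := Finset.card_le_card h
    omega
  obtain ⟨v, hv1, hv2⟩ := Finset.not_subset.mp hns
  obtain ⟨f, hf, hvf⟩ := Finset.mem_biUnion.mp hv1
  rw [mem_sverts] at hvf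
  exact ⟨f, hf, fun hfMk => hv2 (Finset.mem_biUnion.mpr ⟨f, hfMk, (mem_sverts f v).mpr hvf⟩),
    v, hvf, fun g hg hvg => hv2 (Finset.mem_biUnion.mpr ⟨g, hg, (mem_sverts g v).mpr hvg⟩)⟩

theorem initial_walk {E : Finset (Sym2 V)} {L : Finset V} (hbip : Bipartite E L)
    {Mk Mk1 : Finset (Sym2 V)} (hMkm : IsMatching E Mk) (hMk1m : IsMatching E Mk1)
    (k : ℕ) (hck : Mk.card = k) (hck1 : Mk1.card = k + 1) :
    ∃ l, GoodWalk Mk Mk1 l := by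
  obtain ⟨f, hf, hfnMk, v, hvf, hexp⟩ := exists_exposed hbip hMkm hMk1m k hck hck1
  obtain ⟨w, hwv, hfeq⟩ := exists_other hbip (hMk1m.1 hf) hvf
  refine ⟨[v, w], by simp, by simp [Ne.symm hwv], ?_, ?_⟩
  · intro e he h
    exact hexp e he
  · intro i hi
    have hlen : (pathEdges [v, w]).length = 1 := by simp [pathEdges]
    have hi' : i = 0 := by omega
    subst hi'
    have : (pathEdges [v, w])[0] = s(v, w) := by simp [pathEdges]
    rw [this, ← hfeq]
    exact ⟨fun _ => Finset.mem_sdiff.mpr ⟨hf, hfnMk⟩, fun h => by omega⟩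

/-- If `W` isolates the minimum-weight matching `Mk` of size `k` in a bipartite graph and
`Mk1` is a minimum-weight matching of size `k+1`, then the symmetric difference
`Mk Δ Mk1` is a single augmenting path with respect to `Mk`. -/
theorem symmDiff_is_single_augPath (E : Finset (Sym2 V)) (L : Finset V)
    (hbip : Bipartite E L) (W : Sym2 V → ℤ) (k : ℕ) (Mk Mk1 : Finset (Sym2 V))
    (hMk : Isolates W E k Mk) (hMk1 : MinOfSize W E (k + 1) Mk1) :
    ∃ l : List V, IsAugPath E Mk l ∧ (pathEdges l).toFinset = symmDiff Mk Mk1 := by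
  classical
  set D := symmDiff Mk Mk1 with hD
  obtain ⟨l0, hG0⟩ := initial_walk hbip hMk.1 hMk1.1 k hMk.2.1 hMk1.2.1
  obtain ⟨l, hG, hodd, hlastMk⟩ :=
    walk_run E L hbip W k Mk Mk1 hMk hMk1 D.card l0 hG0 (by rw [← hD]; omega)
  have hpl := pathEdges_length l
  have hlen2 : 2 ≤ l.length := hG.1
  set Pset := (pathEdges l).toFinset with hPsetdef
  have hsubP : Pset ⊆ D := fun e he => goodWalk_sub hG e (List.mem_toFinset.mp he)
  have habsP := walk_absorb hMk.1 hMk1.1 hG (Or.inl ⟨by omega, hlastMk⟩)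
  -- cardinalities
  obtain ⟨hc1, hc2⟩ := walk_counts hG
  have hDMk : D ∩ Mk = Mk \ Mk1 := by
    ext x
    rw [Finset.mem_inter, hD, Finset.mem_symmDiff, Finset.mem_sdiff]
    tauto
  have hDMk1 : D ∩ Mk1 = Mk1 \ Mk := by
    ext x
    rw [Finset.mem_inter, hD, Finset.mem_symmDiff, Finset.mem_sdiff]
    tauto
  have g1 := Finset.card_sdiff_add_card_inter Mk Mk1
  have g2 := Finset.card_sdiff_add_card_inter Mk1 Mk
  have hIc : (Mk ∩ Mk1).card = (Mk1 ∩ Mk).card := by rw [Finset.inter_comm]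
  have hkk := hMk.2.1
  have hkk1 := hMk1.2.1
  -- Pset = D
  have hPD : Pset = D := by
    by_contra hne
    have hnsub : ¬ D ⊆ Pset := fun h => hne (Finset.Subset.antisymm hsubP h)
    set R := D \ Pset with hRdef
    have hRne : R.Nonempty := Finset.sdiff_nonempty.mpr hnsub
    have hsubR : R ⊆ D := Finset.sdiff_subset
    have habsR : ∀ f ∈ D, (∃ v g, g ∈ R ∧ v ∈ g ∧ v ∈ f) → f ∈ R := by
      rintro f hfD ⟨v, g, hgR, hvg, hvf⟩
      rw [hRdef, Finset.mem_sdiff]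
      refine ⟨hfD, fun hfP => ?_⟩
      have hgD : g ∈ D := hsubR hgR
      have := habsP g hgD ⟨v, f, hfP, hvf, hvg⟩
      exact (Finset.mem_sdiff.mp hgR).2 this
    have hsub1 : Pset ∩ Mk ⊆ D ∩ Mk := fun x hx => by
      rw [Finset.mem_inter] at hx ⊢
      exact ⟨hsubP hx.1, hx.2⟩
    have hsub2 : Pset ∩ Mk1 ⊆ D ∩ Mk1 := fun x hx => by
      rw [Finset.mem_inter] at hx ⊢
      exact ⟨hsubP hx.1, hx.2⟩
    have hRMk : R ∩ Mk = (D ∩ Mk) \ (Pset ∩ Mk) := by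
      ext x
      simp only [hRdef, Finset.mem_sdiff, Finset.mem_inter]
      tauto
    have hRMk1 : R ∩ Mk1 = (D ∩ Mk1) \ (Pset ∩ Mk1) := by
      ext x
      simp only [hRdef, Finset.mem_sdiff, Finset.mem_inter]
      tauto
    have e1 : (R ∩ Mk).card + (Pset ∩ Mk).card = (D ∩ Mk).card := by
      rw [hRMk]
      exact Finset.card_sdiff_add_card_eq_card hsub1
    have e2 : (R ∩ Mk1).card + (Pset ∩ Mk1).card = (D ∩ Mk1).card := by
      rw [hRMk1]
      exact Finset.card_sdiff_add_card_eq_card hsub2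
    have hcDMk : (D ∩ Mk).card + 1 = (D ∩ Mk1).card := by
      rw [hDMk, hDMk1]
      omega
    obtain ⟨m, hm⟩ : ∃ m, (pathEdges l).length = 2 * m + 1 := ⟨(pathEdges l).length / 2, by omega⟩
    have hc1' : (Pset ∩ Mk).card = m := by rw [hc1]; omega
    have hc2' : (Pset ∩ Mk1).card = m + 1 := by rw [hc2]; omega
    have hceq : (R ∩ Mk).card = (R ∩ Mk1).card := by omega
    have hRsplit : R ⊆ (R ∩ Mk) ∪ (R ∩ Mk1) := by
      intro x hx
      have hxD : x ∈ D := hsubR hx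
      rw [hD, Finset.mem_symmDiff] at hxD
      rw [Finset.mem_union, Finset.mem_inter, Finset.mem_inter]
      tauto
    have hRMk1ne : (R ∩ Mk1).Nonempty := by
      rw [← Finset.card_pos]
      by_contra hzero
      have h0 : (R ∩ Mk1).card = 0 := by omega
      have hRcard := Finset.card_le_card hRsplit
      have := Finset.card_union_le (R ∩ Mk) (R ∩ Mk1)
      have := Finset.card_pos.mpr hRne
      omega
    exact balanced_contra E W k Mk Mk1 hMk hMk1 R hsubR habsR hceq hRMk1ne
  refine ⟨l, ⟨hlen2, hG.2.1, ?_, hodd, ?_, ?_⟩, hPD⟩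
  · intro e he
    have := goodWalk_sub hG e he
    rw [Finset.mem_symmDiff] at this
    rcases this with ⟨h1, _⟩ | ⟨h1, _⟩
    · exact hMk.1.1 h1
    · exact hMk1.1.1 h1
  · intro i h
    have halt := hG.2.2.2 i h
    constructor
    · intro hm
      by_contra hoddi
      have := (Finset.mem_sdiff.mp (halt.1 (by omega))).2
      exact this hm
    · intro hoddi
      exact (Finset.mem_sdiff.mp (halt.2 hoddi)).1
  · intro e he
    have hnil : l ≠ [] := by
      intro h
      rw [h] at hlen2
      simp at hlen2
    constructor
    · intro a ha
      rw [List.head?_eq_head hnil, List.head_eq_getElem] at ha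
      have : l[0]'(by omega) = a := Option.some.inj ha
      rw [← this]
      exact hG.2.2.1 e he (by omega)
    · intro a ha
      rw [List.getLast?_eq_getLast hnil, List.getLast_eq_getElem] at ha
      have : l[l.length - 1]'(by omega) = a := Option.some.inj ha
      rw [← this]
      exact hlastMk e he (by omega)
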